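/- For any labelled Markov chain (X,L,τ,l), any rational ε ∈ [0,1], and any states x,y ∈ X, if the judgment x ⊢_ε y is derivable in the derivation system, then there exists a formula φ of the logic L such that ⟦φ⟧(x) = ε and ⟦φ⟧(y) = 0. -/
import Mathlib

set_option linter.unusedSectionVars false
set_option maxHeartbeats 1000000


/-- A finitely supported, rational-valued probability distribution on `X`. -/
structure FinDist (X : Type*) where
  p : X → ℝ
  nonneg : ∀ x, 0 ≤ p x
  rat : ∀ x, ∃ q : ℚ, (q : ℝ) = p x
  supp : Finset X
  mem_supp : ∀ x, x ∈ supp ↔ p x ≠ 0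
  sum_one : ∑ x ∈ supp, p x = 1

/-- A labelled Markov chain with states `X` and labels `L`. -/
structure LMC (X : Type*) (L : Type*) where
  τ : X → FinDist X
  label : X → L

/-- Expectation `μ ⊨ h = ∑ x, μ(x)·h(x)`. -/
noncomputable def expv {X : Type*} (μ : FinDist X) (h : X → ℝ) : ℝ :=
  ∑ z ∈ μ.supp, μ.p z * h z

/-- The derivation system for lower bounds on behavioural distances. -/
inductive Deriv {X L : Type*} [DecidableEq X] (M : LMC X L) : X → ℚ → X → Prop where
  | zero (x y : X) : Deriv M x 0 y
  | lab (x y : X) : M.label x ≠ M.label y → Deriv M x 1 y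
  | symm {x y : X} {ε : ℚ} : Deriv M y ε x → Deriv M x ε y
  | weak {x y : X} {ε ε' : ℚ} : Deriv M x ε' y → 0 ≤ ε → ε ≤ ε' → Deriv M x ε y
  | exp {x y : X} {ε : ℚ} (h : X → ℚ) :
      0 ≤ ε →
      (∀ z ∈ (M.τ x).supp ∪ (M.τ y).supp, 0 ≤ h z ∧ h z ≤ 1) →
      (∀ x' ∈ (M.τ x).supp ∪ (M.τ y).supp, ∀ y' ∈ (M.τ x).supp ∪ (M.τ y).supp,
        h y' < h x' → Deriv M x' (h x' - h y') y') →
      (ε : ℝ) ≤ expv (M.τ x) (fun z => ((h z : ℚ) : ℝ))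
              - expv (M.τ y) (fun z => ((h z : ℚ) : ℝ)) →
      Deriv M x ε y

/-- Formulas of the logic `𝓛`. -/
inductive Formula (L : Type*) where
  | atom : L → Formula L
  | next : Formula L → Formula L
  | neg : Formula L → Formula L
  | sub : Formula L → {q : ℚ // 0 ≤ q ∧ q ≤ 1} → Formula L
  | or : Formula L → Formula L → Formula L

/-- Quantitative semantics of the logic. -/
noncomputable def interp {X L : Type*} [DecidableEq L] (M : LMC X L) : Formula L → X → ℝ
  | .atom a, x => if M.label x = a then 1 else 0
  | .next φ, x => expv (M.τ x) (interp M φ)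
  | .neg φ, x => 1 - interp M φ x
  | .sub φ q, x => max 0 (interp M φ x - (q.1 : ℝ))
  | .or φ ψ, x => max (interp M φ x) (interp M ψ x)

section helpers
variable {X L : Type*} [DecidableEq X] [DecidableEq L] [Nonempty L]

lemma expv_nonneg (μ : FinDist X) {f : X → ℝ} (hf : ∀ z ∈ μ.supp, 0 ≤ f z) :
    0 ≤ expv μ f :=
  Finset.sum_nonneg fun z hz => mul_nonneg (μ.nonneg z) (hf z hz)

lemma expv_le_one (μ : FinDist X) {f : X → ℝ} (hf : ∀ z ∈ μ.supp, f z ≤ 1) :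
    expv μ f ≤ 1 := by
  calc expv μ f ≤ ∑ z ∈ μ.supp, μ.p z * 1 :=
        Finset.sum_le_sum fun z hz => mul_le_mul_of_nonneg_left (hf z hz) (μ.nonneg z)
    _ = 1 := by simp [μ.sum_one]

lemma expv_congr (μ : FinDist X) {f g : X → ℝ} (h : ∀ z ∈ μ.supp, f z = g z) :
    expv μ f = expv μ g :=
  Finset.sum_congr rfl fun z hz => by rw [h z hz]

lemma expv_rat (μ : FinDist X) (h : X → ℚ) :
    ∃ r : ℚ, (r : ℝ) = expv μ (fun z => ((h z : ℚ) : ℝ)) := by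
  choose pr hpr using μ.rat
  refine ⟨∑ z ∈ μ.supp, pr z * h z, ?_⟩
  push_cast
  exact Finset.sum_congr rfl fun z _ => by rw [hpr]

lemma interp_bounds (M : LMC X L) (φ : Formula L) :
    ∀ z, 0 ≤ interp M φ z ∧ interp M φ z ≤ 1 := by
  induction φ with
  | atom a => intro z; by_cases h : M.label z = a <;> simp [interp, h]
  | next φ ih =>
      intro z
      exact ⟨expv_nonneg _ (fun w _ => (ih w).1), expv_le_one _ (fun w _ => (ih w).2)⟩
  | neg φ ih => intro z; obtain ⟨h0, h1⟩ := ih z; constructor <;> simp [interp] <;> linarith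
  | sub φ q ih =>
      intro z; obtain ⟨h0, h1⟩ := ih z
      have q0 : (0:ℝ) ≤ (q.1:ℝ) := by exact_mod_cast q.2.1
      constructor
      · simp [interp]
      · simp only [interp]
        exact max_le zero_le_one (by linarith)
  | or φ ψ ih1 ih2 =>
      intro z
      exact ⟨le_max_of_le_left (ih1 z).1, max_le (ih1 z).2 (ih2 z).2⟩

noncomputable def cst (L : Type*) [Nonempty L] (c : {q : ℚ // 0 ≤ q ∧ q ≤ 1}) : Formula L :=
  .neg (.sub (.neg (.sub (.atom (Classical.arbitrary L)) ⟨1, by norm_num⟩)) c)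

lemma interp_cst (M : LMC X L) (c : {q : ℚ // 0 ≤ q ∧ q ≤ 1}) (z : X) :
    interp M (cst L c) z = (c.1 : ℝ) := by
  have hc1 : (c.1 : ℝ) ≤ 1 := by exact_mod_cast c.2.2
  have hc0 : (0:ℝ) ≤ (c.1 : ℝ) := by exact_mod_cast c.2.1
  by_cases h : M.label z = Classical.arbitrary L <;>
    simp [cst, interp, h] <;> rw [max_eq_right (by linarith)] <;> ring

def minF {L : Type*} (φ ψ : Formula L) : Formula L := .neg (.or (.neg φ) (.neg ψ))

lemma interp_minF (M : LMC X L) (φ ψ : Formula L) (z : X) :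
    interp M (minF φ ψ) z = min (interp M φ z) (interp M ψ z) := by
  simp only [minF, interp]
  rcases le_total (interp M φ z) (interp M ψ z) with h | h
  · rw [max_eq_left (by linarith), min_eq_left h]; ring
  · rw [max_eq_right (by linarith), min_eq_right h]; ring

def plusF {L : Type*} (φ : Formula L) (c : {q : ℚ // 0 ≤ q ∧ q ≤ 1}) : Formula L :=
  .neg (.sub (.neg φ) c)

lemma interp_plusF (M : LMC X L) (φ : Formula L) (c : {q : ℚ // 0 ≤ q ∧ q ≤ 1}) (z : X) :
    interp M (plusF φ c) z = min 1 (interp M φ z + (c.1 : ℝ)) := by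
  simp only [plusF, interp]
  rcases le_total (1 - interp M φ z - (c.1:ℝ)) 0 with h | h
  · rw [max_eq_left h, min_eq_left (by linarith)]; ring
  · rw [max_eq_right h, min_eq_right (by linarith)]; ring

noncomputable def lOr (L : Type*) [Nonempty L] (l : List (Formula L)) : Formula L :=
  l.foldr .or (cst L ⟨0, by norm_num⟩)

lemma interp_lOr (M : LMC X L) (l : List (Formula L)) (z : X) :
    interp M (lOr L l) z = (l.map (fun φ => interp M φ z)).foldr max 0 := by
  induction l with
  | nil => simp [lOr, interp_cst]
  | cons φ l ih => simp only [lOr, List.foldr, List.map] at ih ⊢; rw [interp, ih]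

noncomputable def lAnd (L : Type*) [Nonempty L] (l : List (Formula L)) : Formula L :=
  l.foldr minF (cst L ⟨1, by norm_num⟩)

lemma interp_lAnd (M : LMC X L) (l : List (Formula L)) (z : X) :
    interp M (lAnd L l) z = (l.map (fun φ => interp M φ z)).foldr min 1 := by
  induction l with
  | nil => simp [lAnd, interp_cst]
  | cons φ l ih => simp only [lAnd, List.foldr, List.map] at ih ⊢; rw [interp_minF, ih]

lemma le_foldr_max {l : List ℝ} {a v : ℝ} (h : v ∈ l) : v ≤ l.foldr max a := by
  induction l with
  | nil => simp at h
  | cons b l ih =>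
      rcases List.mem_cons.mp h with rfl | h
      · exact le_max_left _ _
      · exact le_max_of_le_right (ih h)

lemma foldr_max_le {l : List ℝ} {a b : ℝ} (ha : a ≤ b) (h : ∀ v ∈ l, v ≤ b) :
    l.foldr max a ≤ b := by
  induction l with
  | nil => exact ha
  | cons c l ih =>
      exact max_le (h c (by simp)) (ih fun v hv => h v (by simp [hv]))

lemma foldr_min_le {l : List ℝ} {a v : ℝ} (h : v ∈ l) : l.foldr min a ≤ v := by
  induction l with
  | nil => simp at h
  | cons b l ih =>
      rcases List.mem_cons.mp h with rfl | h
      · exact min_le_left _ _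
      · exact le_trans (min_le_right _ _) (ih h)

lemma le_foldr_min {l : List ℝ} {a b : ℝ} (ha : b ≤ a) (h : ∀ v ∈ l, b ≤ v) :
    b ≤ l.foldr min a := by
  induction l with
  | nil => exact ha
  | cons c l ih =>
      exact le_min (h c (by simp)) (ih fun v hv => h v (by simp [hv]))

lemma main_lemma (M : LMC X L) :
    ∀ {x y : X} {ε : ℚ}, Deriv M x ε y →
      ∃ φ : Formula L, interp M φ x = (ε : ℝ) ∧ interp M φ y = 0 := by
  intro x y ε hder
  induction hder with
  | zero x y =>
      exact ⟨cst L ⟨0, by norm_num⟩, by simp [interp_cst], by simp [interp_cst]⟩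
  | lab x y hne =>
      refine ⟨.atom (M.label x), by simp [interp], by simp [interp, Ne.symm hne]⟩
  | symm hd ih =>
      obtain ⟨φ, h1, h2⟩ := ih
      rename_i x y ε
      obtain ⟨hb0, hb1⟩ := interp_bounds M φ y
      have hε0 : (0:ℚ) ≤ ε := by exact_mod_cast h1 ▸ hb0
      have hε1 : ε ≤ 1 := by exact_mod_cast h1 ▸ hb1
      refine ⟨.sub (.neg φ) ⟨1 - ε, by constructor <;> linarith⟩, ?_, ?_⟩
      · simp only [interp, h2]
        push_cast
        rw [max_eq_right (by linarith)]
        ring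
      · simp only [interp, h1]
        push_cast
        rw [max_eq_left (by linarith)]
  | weak hd hε0 hle ih =>
      obtain ⟨φ, h1, h2⟩ := ih
      rename_i x y ε ε'
      obtain ⟨hb0, hb1⟩ := interp_bounds M φ x
      have hε'1 : ε' ≤ 1 := by exact_mod_cast h1 ▸ hb1
      refine ⟨.sub φ ⟨ε' - ε, by constructor <;> linarith⟩, ?_, ?_⟩
      · simp only [interp, h1]
        push_cast
        have hε0' : (0:ℝ) ≤ (ε:ℝ) := by exact_mod_cast hε0
        rw [max_eq_right (by push_cast; linarith)]
        ring
      · simp only [interp, h2]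
        push_cast
        rw [max_eq_left]
        have : (0:ℝ) ≤ (ε':ℝ) - (ε:ℝ) := by exact_mod_cast sub_nonneg.mpr hle
        linarith
  | exp h hε0 hbnd hd hexp ih =>
      rename_i x y ε
      classical
      set S := (M.τ x).supp ∪ (M.τ y).supp with hS
      choose F hF1 hF2 using ih
      have hq0 : ∀ a, (0:ℚ) ≤ max 0 (min 1 (h a)) := fun a => le_max_left _ _
      have hq1 : ∀ a, max 0 (min 1 (h a)) ≤ 1 := fun a => max_le zero_le_one (min_le_left _ _)
      set q : X → {r : ℚ // 0 ≤ r ∧ r ≤ 1} := fun a => ⟨max 0 (min 1 (h a)), hq0 a, hq1 a⟩ with hqdef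
      have hq : ∀ a ∈ S, (q a).1 = h a := by
        intro a ha
        obtain ⟨h0, h1⟩ := hbnd a ha
        simp [hqdef, min_eq_right h1, max_eq_right h0]
      set G : X → X → Formula L := fun a b =>
        if hc : a ∈ S ∧ b ∈ S ∧ h b < h a then plusF (F a hc.1 b hc.2.1 hc.2.2) (q b)
        else cst L ⟨1, by norm_num⟩ with hGdef
      have hGa : ∀ a ∈ S, ∀ b ∈ S, h b < h a → interp M (G a b) a = ((h a : ℚ) : ℝ) := by
        intro a ha b hb hlt
        have hha1 : ((h a : ℚ):ℝ) ≤ 1 := by exact_mod_cast (hbnd a ha).2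
        rw [hGdef]
        simp only [dif_pos (show a ∈ S ∧ b ∈ S ∧ h b < h a from ⟨ha, hb, hlt⟩)]
        rw [interp_plusF, hF1 a ha b hb hlt, hq b hb]
        push_cast
        rw [show ((h a:ℚ):ℝ) - ((h b:ℚ):ℝ) + ((h b:ℚ):ℝ) = ((h a:ℚ):ℝ) by ring,
          min_eq_right hha1]
      have hGb : ∀ a ∈ S, ∀ b ∈ S, h b < h a → interp M (G a b) b = ((h b : ℚ) : ℝ) := by
        intro a ha b hb hlt
        have hhb1 : ((h b : ℚ):ℝ) ≤ 1 := by exact_mod_cast (hbnd b hb).2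
        rw [hGdef]
        simp only [dif_pos (show a ∈ S ∧ b ∈ S ∧ h b < h a from ⟨ha, hb, hlt⟩)]
        rw [interp_plusF, hF2 a ha b hb hlt, hq b hb, zero_add, min_eq_right hhb1]
      set Φa : X → Formula L := fun a =>
        minF (cst L (q a))
          (lAnd L ((S.toList.filter (fun b => decide (h b < h a))).map (G a))) with hΦadef
      have hAa : ∀ a ∈ S, interp M (Φa a) a = ((h a : ℚ):ℝ) := by
        intro a ha
        rw [hΦadef]
        simp only
        rw [interp_minF, interp_cst, interp_lAnd, hq a ha]
        rw [min_eq_left]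
        apply le_foldr_min
        · exact_mod_cast (hbnd a ha).2
        · intro v hv
          simp only [List.mem_map, List.mem_filter, Finset.mem_toList,
            decide_eq_true_eq] at hv
          obtain ⟨ψ, ⟨b, ⟨hbS, hblt⟩, rfl⟩, rfl⟩ := hv
          rw [hGa a ha b hbS hblt]
      have hB : ∀ a ∈ S, ∀ z ∈ S, interp M (Φa a) z ≤ ((h z:ℚ):ℝ) := by
        intro a ha z hz
        rw [hΦadef]
        simp only
        rw [interp_minF, interp_cst, interp_lAnd]
        by_cases hlt : h z < h a
        · have hmem : interp M (G a z) z ∈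
              (((S.toList.filter (fun b => decide (h b < h a))).map (G a)).map
                (fun φ => interp M φ z)) := by
            apply List.mem_map_of_mem
            apply List.mem_map_of_mem
            rw [List.mem_filter]
            exact ⟨Finset.mem_toList.mpr hz, by simp [hlt]⟩
          calc min ((q a).1 : ℝ) _ ≤ _ := min_le_right _ _
            _ ≤ interp M (G a z) z := foldr_min_le hmem
            _ = ((h z:ℚ):ℝ) := hGb a ha z hz hlt
        · push_neg at hlt
          refine le_trans (min_le_left _ _) ?_
          rw [hq a ha]
          exact_mod_cast hlt
      set Φ : Formula L := lOr L (S.toList.map Φa) with hΦdef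
      have hΦ : ∀ z ∈ S, interp M Φ z = ((h z:ℚ):ℝ) := by
        intro z hz
        rw [hΦdef, interp_lOr]
        apply le_antisymm
        · apply foldr_max_le (by exact_mod_cast (hbnd z hz).1)
          intro v hv
          simp only [List.mem_map, Finset.mem_toList] at hv
          obtain ⟨ψ, ⟨a, haS, rfl⟩, rfl⟩ := hv
          exact hB a haS z hz
        · have hmem : interp M (Φa z) z ∈
              ((S.toList.map Φa).map (fun φ => interp M φ z)) := by
            apply List.mem_map_of_mem
            apply List.mem_map_of_mem
            exact Finset.mem_toList.mpr hz
          calc ((h z:ℚ):ℝ) = interp M (Φa z) z := (hAa z hz).symm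
            _ ≤ _ := le_foldr_max hmem
      obtain ⟨qy, hqy⟩ := expv_rat (M.τ y) h
      have hsubx : ∀ z ∈ (M.τ x).supp, z ∈ S := fun z hz => Finset.mem_union_left _ hz
      have hsuby : ∀ z ∈ (M.τ y).supp, z ∈ S := fun z hz => Finset.mem_union_right _ hz
      have hqy0 : (0:ℝ) ≤ (qy:ℝ) := by
        rw [hqy]
        exact expv_nonneg _ (fun z hz => by exact_mod_cast (hbnd z (hsuby z hz)).1)
      have hqy1 : (qy:ℝ) ≤ 1 := by
        rw [hqy]
        exact expv_le_one _ (fun z hz => by exact_mod_cast (hbnd z (hsuby z hz)).2)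
      have hεr : (0:ℝ) ≤ (ε:ℝ) := by exact_mod_cast hε0
      have hA1 : expv (M.τ x) (fun z => ((h z:ℚ):ℝ)) ≤ 1 :=
        expv_le_one _ (fun z hz => by exact_mod_cast (hbnd z (hsubx z hz)).2)
      have hε1 : ε ≤ 1 := by
        have h0 : (0:ℝ) ≤ expv (M.τ y) (fun z => ((h z:ℚ):ℝ)) := by rw [← hqy]; exact hqy0
        have : (ε:ℝ) ≤ 1 := le_trans hexp (by linarith)
        exact_mod_cast this
      have key : (ε:ℝ) ≤ expv (M.τ x) (fun z => ((h z:ℚ):ℝ)) - (qy:ℝ) := by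
        rw [hqy]; exact hexp
      refine ⟨minF (.sub (.next Φ) ⟨qy, by exact_mod_cast hqy0, by exact_mod_cast hqy1⟩)
        (cst L ⟨ε, hε0, hε1⟩), ?_, ?_⟩
      · rw [interp_minF, interp_cst]
        show min (max 0 (expv (M.τ x) (interp M Φ) - (qy:ℝ))) (ε:ℝ) = (ε:ℝ)
        rw [expv_congr (M.τ x) (fun z hz => hΦ z (hsubx z hz))]
        rw [max_eq_right (by linarith), min_eq_right (by linarith)]
      · rw [interp_minF, interp_cst]
        show min (max 0 (expv (M.τ y) (interp M Φ) - (qy:ℝ))) (ε:ℝ) = 0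
        rw [expv_congr (M.τ y) (fun z hz => hΦ z (hsuby z hz)), ← hqy]
        rw [sub_self, max_self, min_eq_left hεr]

end helpers

/-- From every derivation a formula witnessing the same bound can be constructed. -/
theorem proof_to_formula {X L : Type*} [DecidableEq X] [DecidableEq L] [Nonempty L]
    (M : LMC X L) (ε : ℚ) (hε0 : 0 ≤ ε) (hε1 : ε ≤ 1) (x y : X)
    (hder : Deriv M x ε y) :
    ∃ φ : Formula L, interp M φ x = (ε : ℝ) ∧ interp M φ y = 0 := main_lemma M hder
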